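/- arXiv:2407.19796 — 2 statements merged into one kernel-verified Lean document; each statement's English description precedes it below -/
import Mathlib

section
/- Suppose p = (u_1,...,u_h) is an h-segmentation of a string of length s = |u_1···u_h| such that p can be embedded into both strings S and T, and the last segment u_h is a common suffix of S and T. Then there is an h-segmentation p' = (u_1',...,u_h') of a (possibly different) string of the same length s that can be embedded into both S and T, such that |u_h'| = min{lcsuf(S,T), s}, where lcsuf(S,T) is the length of the longest common suffix of S and T. -/
open List

/-- `Embeds us T` : the segments `us` can be embedded (in order, with gaps) into `T`,
i.e. `T = p ++ u₁ ++ g₁ ++ u₂ ++ ⋯ ++ u_f ++ s`. -/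
def Embeds {α : Type*} : List (List α) → List α → Prop
  | [], _ => True
  | u :: us, T => ∃ p T', T = p ++ u ++ T' ∧ Embeds us T'

/-- `SegSub f T` : the set of `f`-segmental subsequences of `T`. -/
def SegSub {α : Type*} (f : ℕ) (T : List α) : Set (List α) :=
  { P | ∃ us : List (List α), us.length = f ∧ us.flatten = P ∧ Embeds us T }

/-- `slcs S T h` : maximum length of a string having an `h`-segmentation
embeddable into both `S` and `T`. -/
noncomputable def slcs {α : Type*} (S T : List α) (h : ℕ) : ℕ :=
  sSup { s | ∃ P : List α, P.length = s ∧ P ∈ SegSub h S ∧ P ∈ SegSub h T }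

/-- `lcsuf S T` : length of the longest common suffix of `S` and `T`. -/
noncomputable def lcsuf {α : Type*} (S T : List α) : ℕ :=
  sSup { l | ∃ w : List α, w.length = l ∧ w <:+ S ∧ w <:+ T }

/-- `Lfun T₁ T₂ i s h` : the smallest `j` with `slcs (T₁[1..i]) (T₂[1..j]) h = s`,
or `⊤` if no such `j` exists. -/
noncomputable def Lfun {α : Type*} (T₁ T₂ : List α) (i s h : ℕ) : ℕ∞ :=
  sInf { j : ℕ∞ | ∃ jn : ℕ, j = (jn : ℕ∞) ∧ slcs (T₁.take i) (T₂.take jn) h = s }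


namespace SegHelp
variable {α : Type*}

lemma embeds_flatten_length_le : ∀ (vs : List (List α)) (X : List α),
    Embeds vs X → vs.flatten.length ≤ X.length
  | [], _, _ => by simp
  | v :: vs, X, ⟨p, T', hX, h⟩ => by
    have := embeds_flatten_length_le vs T' h
    subst hX
    simp only [flatten_cons, length_append]
    omega

lemma embeds_mono : ∀ (vs : List (List α)) (X p q : List α),
    Embeds vs X → Embeds vs (p ++ X ++ q)
  | [], _, _, _, _ => trivial
  | v :: vs, X, p, q, ⟨p0, T', hX, h⟩ => by
    refine ⟨p ++ p0, T' ++ q, ?_, ?_⟩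
    · subst hX; simp
    · have := embeds_mono vs T' [] q h; simpa using this

lemma embeds_append_single : ∀ (vs : List (List α)) (x w r : List α),
    Embeds vs x → Embeds (vs ++ [w]) (x ++ w ++ r)
  | [], x, w, r, _ => ⟨x, r, by simp, trivial⟩
  | v :: vs, x, w, r, ⟨p, T', hx, h⟩ => by
    refine ⟨p, T' ++ w ++ r, ?_, ?_⟩
    · subst hx; simp
    · exact embeds_append_single vs T' w r h

lemma embeds_append_single_decomp : ∀ (vs : List (List α)) (u S : List α),
    Embeds (vs ++ [u]) S → ∃ x r, S = x ++ u ++ r ∧ Embeds vs x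
  | [], u, S, ⟨p, T', hS, _⟩ => ⟨p, T', hS, trivial⟩
  | v :: vs, u, S, ⟨p, T', hS, h⟩ => by
    obtain ⟨x, r, hT', h2⟩ := embeds_append_single_decomp vs u T' h
    exact ⟨p ++ v ++ x, r, by subst hS hT'; simp, p, x, rfl, h2⟩

def trim : List (List α) → ℕ → List (List α)
  | [], _ => []
  | v :: vs, k => v.take k :: trim vs (k - v.length)

lemma trim_length : ∀ (vs : List (List α)) (k : ℕ), (trim vs k).length = vs.length
  | [], _ => rfl
  | v :: vs, k => by
    show (v.take k :: trim vs (k - v.length)).length = _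
    simp [trim_length vs]

lemma trim_flatten_length : ∀ (vs : List (List α)) (k : ℕ), k ≤ vs.flatten.length →
    (trim vs k).flatten.length = k
  | [], k, h => by
    have : k = 0 := by simpa using h
    subst this; rfl
  | v :: vs, k, h => by
    have hfl : (v :: vs).flatten.length = v.length + vs.flatten.length := by
      rw [flatten_cons, length_append]
    rw [hfl] at h
    rw [show trim (v :: vs) k = v.take k :: trim vs (k - v.length) from rfl,
      flatten_cons, length_append, length_take]
    rcases le_or_gt k v.length with hk | hk
    · have h0 : k - v.length = 0 := by omega
      rw [h0, trim_flatten_length vs 0 (Nat.zero_le _)]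
      omega
    · rw [trim_flatten_length vs (k - v.length) (by omega)]
      omega

lemma embeds_trim_zero : ∀ (vs : List (List α)) (Z : List α), Embeds (trim vs 0) Z
  | [], _ => trivial
  | v :: vs, Z => by
    refine ⟨[], Z, by simp, ?_⟩
    rw [Nat.zero_sub]
    exact embeds_trim_zero vs Z

lemma embeds_trim : ∀ (vs : List (List α)) (X : List α) (k : ℕ),
    Embeds vs X → k ≤ vs.flatten.length →
    ∃ Y, Y <+: X ∧ Y.length + (vs.flatten.length - k) ≤ X.length ∧ Embeds (trim vs k) Y
  | [], X, k, _, hk => ⟨[], nil_prefix, by simpa using hk.trans (by simp), trivial⟩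
  | v :: vs, X, k, ⟨p, T', hX, h⟩, hk => by
    have hfl : (v :: vs).flatten.length = v.length + vs.flatten.length := by
      rw [flatten_cons, length_append]
    rw [hfl] at hk ⊢
    have hrest := embeds_flatten_length_le vs T' h
    rcases le_or_gt k v.length with hkv | hkv
    · refine ⟨p ++ v.take k, ?_, ?_, ?_⟩
      · subst hX
        refine ⟨v.drop k ++ T', ?_⟩
        simp only [append_assoc]
        rw [← append_assoc (take k v), take_append_drop]
      · subst hX
        simp only [length_append, length_take]
        omega
      · refine ⟨p, [], by simp, ?_⟩
        rw [show k - v.length = 0 from by omega]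
        exact embeds_trim_zero vs []
    · obtain ⟨Y', hY'p, hY'l, hY'e⟩ := embeds_trim vs T' (k - v.length) h (by omega)
      obtain ⟨t, ht⟩ := hY'p
      refine ⟨p ++ v ++ Y', ?_, ?_, ?_⟩
      · subst hX
        exact ⟨t, by rw [← ht]; simp⟩
      · subst hX
        simp only [length_append]
        omega
      · exact ⟨p, Y', by rw [take_of_length_le (by omega : v.length ≤ k)], hY'e⟩

lemma key (us : List (List α)) (u S x r w : List α) (k : ℕ)
    (hdec : S = x ++ u ++ r) (he : Embeds us x) (hwS : w <:+ S)
    (hk : k ≤ us.flatten.length)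
    (harith : w.length ≤ us.flatten.length - k + u.length) :
    Embeds (trim us k ++ [w]) S := by
  obtain ⟨Y, hYp, hYl, hYe⟩ := embeds_trim us x k he hk
  obtain ⟨Q, hQ⟩ := hwS
  have hYS : Y <+: S := by
    subst hdec
    exact hYp.trans ⟨u ++ r, by simp⟩
  have hQS : Q <+: S := ⟨w, hQ⟩
  have hYlen : Y.length ≤ Q.length := by
    have h1 : Q.length + w.length = S.length := by rw [← hQ]; simp
    have h2 : x.length + u.length + r.length = S.length := by
      subst hdec; simp only [length_append]
    omega
  obtain ⟨mid, hmid⟩ := prefix_of_prefix_length_le hYS hQS hYlen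
  have hSeq : S = (Y ++ mid) ++ w ++ [] := by rw [append_nil, hmid, hQ]
  rw [hSeq]
  exact embeds_append_single _ _ w [] (by simpa using embeds_mono _ Y [] mid hYe)

end SegHelp

theorem exists_segmentation_with_long_last_segment {α : Type*} (S T : List α)
    (us : List (List α)) (u : List α)
    (hS : Embeds (us ++ [u]) S) (hT : Embeds (us ++ [u]) T)
    (huS : u <:+ S) (huT : u <:+ T) :
    ∃ (us' : List (List α)) (u' : List α),
      (us' ++ [u']).length = (us ++ [u]).length ∧
      (us' ++ [u']).flatten.length = (us ++ [u]).flatten.length ∧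
      Embeds (us' ++ [u']) S ∧ Embeds (us' ++ [u']) T ∧
      u'.length = min (lcsuf S T) ((us ++ [u]).flatten.length) := by
  classical
  set s := (us ++ [u]).flatten.length with hs
  have hAne : Set.Nonempty { l | ∃ w : List α, w.length = l ∧ w <:+ S ∧ w <:+ T } :=
    ⟨0, [], rfl, nil_suffix, nil_suffix⟩
  have hAbdd : BddAbove { l | ∃ w : List α, w.length = l ∧ w <:+ S ∧ w <:+ T } :=
    ⟨S.length, fun l ⟨w, hw, hwS, _⟩ => hw ▸ hwS.length_le⟩
  obtain ⟨wm, hwm, hwmS, hwmT⟩ : lcsuf S T ∈ { l | ∃ w : List α, w.length = l ∧ w <:+ S ∧ w <:+ T } :=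
    Nat.sSup_mem hAne hAbdd
  have huL : u.length ≤ lcsuf S T := le_csSup hAbdd ⟨u, rfl, huS, huT⟩
  set ℓ := min (lcsuf S T) s with hℓ
  have hℓL : ℓ ≤ lcsuf S T := min_le_left _ _
  have hℓs : ℓ ≤ s := min_le_right _ _
  set w := wm.drop (wm.length - ℓ) with hw
  have hwlen : w.length = ℓ := by rw [hw, length_drop]; omega
  have hwS : w <:+ S := (drop_suffix _ wm).trans hwmS
  have hwT : w <:+ T := (drop_suffix _ wm).trans hwmT
  have hflat : s = us.flatten.length + u.length := by
    rw [hs, flatten_append]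
    simp
  have huℓ : u.length ≤ ℓ := le_min huL (by omega)
  obtain ⟨xS, rS, hSdec, hSe⟩ := SegHelp.embeds_append_single_decomp us u S hS
  obtain ⟨xT, rT, hTdec, hTe⟩ := SegHelp.embeds_append_single_decomp us u T hT
  set k := s - ℓ with hk
  have hkle : k ≤ us.flatten.length := by omega
  have harith : w.length ≤ us.flatten.length - k + u.length := by rw [hwlen]; omega
  refine ⟨SegHelp.trim us k, w, ?_, ?_, ?_, ?_, ?_⟩
  · simp [SegHelp.trim_length]
  · rw [flatten_append, length_append, SegHelp.trim_flatten_length us k hkle,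
      show ([w] : List (List α)).flatten = w from by simp, hwlen]
    omega
  · exact SegHelp.key us u S xS rS w k hSdec hSe hwS hkle harith
  · exact SegHelp.key us u T xT rT w k hTdec hTe hwT hkle harith
  · rw [hwlen]
end

section
/- For strings T, P and positive integer f, P ∈ SegSub^f(T) if and only if f ≥ d + 1, where d is the minimum number of cost-1 operations needed to transform T into P using: (i) deleting a nonempty prefix with cost 0, (ii) deleting a nonempty suffix with cost 0, and (iii) deleting a nonempty internal factor (neither prefix nor suffix of the current string) with cost 1; here d = ∞ (and no f works) if P is not a subsequence of T. -/
open List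

/-- Interleave segments `us` with gaps `gs` : `u₁ ++ g₁ ++ u₂ ++ g₂ ++ ⋯`. -/
def weave {α : Type*} : List (List α) → List (List α) → List α
  | [], _ => []
  | u :: us, [] => u ++ weave us []
  | u :: us, g :: gs => u ++ g ++ weave us gs

/-- Minimum number of nonempty internal factors that must be deleted from `T`
(together with a possibly empty prefix and suffix) to obtain `P`; `⊤` if impossible. -/
noncomputable def minDel {α : Type*} (T P : List α) : ℕ∞ :=
  sInf ((↑) '' { k : ℕ | ∃ (p s : List α) (us gs : List (List α)),
    us.length = k + 1 ∧ gs.length = k ∧ (∀ g ∈ gs, g ≠ []) ∧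
    us.flatten = P ∧ T = p ++ weave us gs ++ s })

lemma embeds_prepend {α : Type*} (p : List α) {us : List (List α)} {T : List α}
    (h : Embeds us T) : Embeds us (p ++ T) := by
  cases us with
  | nil => trivial
  | cons u us =>
    obtain ⟨q, T', rfl, h'⟩ := h
    exact ⟨p ++ q, T', by simp, h'⟩

lemma embeds_weave {α : Type*} (us gs : List (List α)) (s : List α) :
    Embeds us (weave us gs ++ s) := by
  induction us generalizing gs s with
  | nil => trivial
  | cons u us ih =>
    cases gs with
    | nil =>
      exact ⟨[], weave us [] ++ s, by simp [weave], ih [] s⟩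
    | cons g gs =>
      exact ⟨[], g ++ (weave us gs ++ s), by simp [weave], embeds_prepend g (ih gs s)⟩

lemma embeds_pad {α : Type*} {us : List (List α)} {T : List α} (h : Embeds us T) :
    Embeds (us ++ [([] : List α)]) T := by
  induction us generalizing T with
  | nil => exact ⟨T, [], by simp, trivial⟩
  | cons u us ih =>
    obtain ⟨p, T', rfl, h'⟩ := h
    exact ⟨p, T', rfl, ih h'⟩

lemma embeds_pad_many {α : Type*} {us : List (List α)} {T : List α} (h : Embeds us T)
    (n : ℕ) : Embeds (us ++ List.replicate n ([] : List α)) T := by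
  induction n with
  | zero => simpa
  | succ n ih =>
    have := embeds_pad ih
    simpa [List.replicate_succ', ← List.append_assoc] using this

lemma embeds_extract {α : Type*} : ∀ {us : List (List α)} {T : List α}, us ≠ [] →
    Embeds us T → ∃ p gs s, gs.length + 1 = us.length ∧ T = p ++ weave us gs ++ s := by
  intro us
  induction us with
  | nil => intro T h; exact absurd rfl h
  | cons u us ih =>
    intro T _ h
    obtain ⟨p, T', rfl, h'⟩ := h
    cases us with
    | nil =>
      exact ⟨p, [], T', by simp, by simp [weave]⟩
    | cons v vs =>
      obtain ⟨p', gs, s, hlen, rfl⟩ := ih (by simp) h'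
      exact ⟨p, p' :: gs, s, by simpa using hlen, by simp [weave]⟩

lemma weave_append_head {α : Type*} (a b : List α) (l hs : List (List α)) :
    weave ((a ++ b) :: l) hs = a ++ weave (b :: l) hs := by
  cases hs <;> simp [weave]

lemma weave_normalize {α : Type*} : ∀ (us gs : List (List α)), gs.length + 1 = us.length →
    ∃ vs hs : List (List α), hs.length + 1 = vs.length ∧ vs.length ≤ us.length ∧
      (∀ g ∈ hs, g ≠ []) ∧ vs.flatten = us.flatten ∧ weave vs hs = weave us gs := by
  intro us
  induction us with
  | nil => intro gs h; simp at h
  | cons u us ih =>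
    intro gs h
    cases us with
    | nil =>
      exact ⟨[u], [], by simp, by simp, by simp, rfl, by
        cases gs with
        | nil => rfl
        | cons g gs => simp at h⟩
    | cons v vs =>
      cases gs with
      | nil => simp at h
      | cons g gs =>
        obtain ⟨ws, hs, h1, h2, h3, h4, h5⟩ := ih gs (by simpa using h)
        cases ws with
        | nil => simp at h1
        | cons w ws =>
          by_cases hg : g = []
          · subst hg
            refine ⟨(u ++ w) :: ws, hs, by simpa using h1, ?_, h3, by simp_all, ?_⟩
            · simpa using Nat.le_succ_of_le h2
            · rw [weave_append_head, h5]
              simp [weave]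
          · refine ⟨u :: w :: ws, g :: hs, by simpa using h1, by simpa using h2, ?_,
              by simp_all, ?_⟩
            · intro x hx
              rcases List.mem_cons.1 hx with rfl | hx
              · exact hg
              · exact h3 x hx
            · simp [weave, h5]

theorem segSub_iff_minDel {α : Type*} (T P : List α) (f : ℕ) (hf : 1 ≤ f) :
    P ∈ SegSub f T ↔ (f : ℕ∞) ≥ minDel T P + 1 := by
  set S : Set ℕ := { k : ℕ | ∃ (p s : List α) (us gs : List (List α)),
    us.length = k + 1 ∧ gs.length = k ∧ (∀ g ∈ gs, g ≠ []) ∧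
    us.flatten = P ∧ T = p ++ weave us gs ++ s } with hS
  have hmd : minDel T P = sInf ((↑) '' S) := rfl
  constructor
  · rintro ⟨us, hlen, hflat, hemb⟩
    have hne : us ≠ [] := by
      intro h; subst h; simp at hlen; omega
    obtain ⟨p, gs, s, hgs, hT⟩ := embeds_extract hne hemb
    obtain ⟨vs, hs, h1, h2, h3, h4, h5⟩ := weave_normalize us gs hgs
    have hmem : hs.length ∈ S := by
      refine ⟨p, s, vs, hs, by omega, rfl, h3, h4.trans hflat, by rw [hT, h5]⟩
    have hle : minDel T P ≤ (hs.length : ℕ∞) := by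
      rw [hmd]
      exact sInf_le ⟨hs.length, hmem, rfl⟩
    have : (hs.length : ℕ∞) + 1 ≤ (f : ℕ∞) := by
      have : hs.length + 1 ≤ f := by omega
      exact_mod_cast this
    calc minDel T P + 1 ≤ (hs.length : ℕ∞) + 1 := by exact add_le_add_left hle 1
      _ ≤ (f : ℕ∞) := this
  · intro h
    have hSne : S.Nonempty := by
      by_contra hemp
      rw [Set.not_nonempty_iff_eq_empty] at hemp
      rw [hmd, hemp] at h
      simp at h
    set k := sInf S with hk
    have hkmem : k ∈ S := Nat.sInf_mem hSne
    have hlb : (k : ℕ∞) ≤ minDel T P := by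
      rw [hmd]
      apply le_sInf
      rintro x ⟨m, hm, rfl⟩
      exact_mod_cast Nat.sInf_le hm
    have hkf : k + 1 ≤ f := by
      have : (k : ℕ∞) + 1 ≤ (f : ℕ∞) := le_trans (add_le_add_left hlb 1) h
      exact_mod_cast this
    obtain ⟨p, s, us, gs, hus, hgs, hne, hflat, hT⟩ := hkmem
    have hemb : Embeds us T := by
      rw [hT, List.append_assoc]
      exact embeds_prepend p (embeds_weave us gs s)
    refine ⟨us ++ List.replicate (f - (k + 1)) [], ?_, ?_, embeds_pad_many hemb _⟩
    · simp [hus]; omega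
    · simp [hflat]
end
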